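/- Let R = ℤ[Δ] with Δ a finitely generated free abelian group of rank n ≥ 1, let m ≥ 1, and let PE ⊆ R^m be a subring defined by finitely many congruences f_i ≡ f_j mod (1 − e^{χ_{ij}}) with each χ_{ij} ≠ 0. Then PE and R^m have the same total ring of fractions; more precisely, for every element x ∈ R^m there exists a non-zero-divisor s ∈ PE (in fact s in the diagonal copy of R) with s·x ∈ PE. -/

import Mathlib

/-- Localization phenomenon: for `PE ⊆ R^m` (with `R = ℤ[Δ]`) defined by
congruences `f_i ≡ f_j mod (1 - e^χ)` with all `χ ≠ 0`, every `x ∈ R^m` can be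
moved into `PE` by multiplying by a diagonal non-zero-divisor `s` lying in
`PE`; hence `PE` and `R^m` have the same total ring of fractions. -/
theorem stmt6 (Δ : Type*) [AddCommGroup Δ] [Module.Free ℤ Δ] [Module.Finite ℤ Δ]
    (n : ℕ) (hn : 1 ≤ n) (hrank : Module.finrank ℤ Δ = n)
    (m : ℕ) (hm : 1 ≤ m)
    (E : Finset (Fin m × Fin m × Δ)) (hE : ∀ t ∈ E, t.2.2 ≠ 0) :
    let R := AddMonoidAlgebra ℤ Δ
    let PE : Set (Fin m → R) := {f | ∀ t ∈ E,
      f t.1 - f t.2.1 ∈ Ideal.span {1 - AddMonoidAlgebra.single t.2.2 (1 : ℤ)}}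
    ∀ x : Fin m → R, ∃ s : R,
      s ∈ nonZeroDivisors R ∧
      (fun _ => s : Fin m → R) ∈ PE ∧
      (fun i => s * x i) ∈ PE := by
  intro R PE x
  classical
  have : UniqueSums Δ :=
    UniqueSums.of_injective_addHom
      ((Module.Free.chooseBasis ℤ Δ).repr.toAddMonoidHom : Δ →+ _)
      (by exact (Module.Free.chooseBasis ℤ Δ).repr.injective) inferInstance
  refine ⟨∏ t ∈ E, (1 - AddMonoidAlgebra.single t.2.2 (1 : ℤ)), ?_, ?_, ?_⟩
  · refine mem_nonZeroDivisors_of_ne_zero ?_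
    refine Finset.prod_ne_zero_iff.mpr fun t ht h0 => ?_
    have h1 : (1 - AddMonoidAlgebra.single t.2.2 (1 : ℤ)).coeff 0 = 0 := by rw [h0]; rfl
    rw [AddMonoidAlgebra.coeff_sub, Finsupp.sub_apply, AddMonoidAlgebra.one_def,
      AddMonoidAlgebra.coeff_single, AddMonoidAlgebra.coeff_single, Finsupp.single_apply,
      Finsupp.single_apply, if_pos rfl, if_neg (hE t ht)] at h1
    omega
  · intro t ht
    simp only [sub_self]
    exact Ideal.zero_mem _
  · intro t ht
    have : (∏ t ∈ E, (1 - AddMonoidAlgebra.single t.2.2 (1 : ℤ))) ∈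
        Ideal.span {1 - AddMonoidAlgebra.single t.2.2 (1 : ℤ)} := by
      exact Ideal.mem_span_singleton.mpr (Finset.dvd_prod_of_mem _ ht)
    have h2 := Ideal.mul_mem_right (x t.1) _ this
    have h3 := Ideal.mul_mem_right (x t.2.1) _ this
    simpa [mul_sub] using Ideal.sub_mem _ h2 h3
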